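/- Let Λ > 0, c > 0, ξ₀ = −ηf(0) < 0, where ηf : [0,∞) → ℝ satisfies ηf(σ) ≥ c for all σ and ξfun(σ) = σ − ηf(σ) is nondecreasing and right-continuous. Let A : [0,∞) → ℝ be given, and let G₀ : [ξ₀, 0] → ℝ be nondecreasing and continuous. Suppose G₁ and G₂ are two functions [ξ₀,∞) → ℝ which are nondecreasing, continuous, equal to G₀ on [ξ₀, 0], continuously differentiable on (0,∞), and which both satisfy, for all σ ≥ 0, the delayed renewal-type equation G(σ) = A(σ) + ∫_{(0,σ]} H(σ − τ, Λ) dμ_G(τ), where μ_G is the Lebesgue–Stieltjes measure of the nondecreasing right-continuous function τ ↦ G(ξfun(τ)), and H(σ, x) = (1/2)·(Erfc((x − σ)/√(2σ)) + exp(2x)·Erfc((x + σ)/√(2σ))) for σ > 0 (H(σ,x) = 0 for σ ≤ 0), with Erfc(z) = (2/√π)·∫_z^∞ exp(−t²) dt. Then G₁ = G₂ on [0,∞). -/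

import Mathlib

open Set MeasureTheory

/-- The complementary error function `Erfc z = (2/√π) ∫_z^∞ exp(-t²) dt`. -/
noncomputable def Erfc (z : ℝ) : ℝ :=
  (2 / Real.sqrt Real.pi) * ∫ t in Set.Ioi z, Real.exp (-t ^ 2)

/-- The cumulative first-passage distribution to `0` of a Brownian motion with unit
negative drift started at `x`:
`H σ x = (1/2)(Erfc((x-σ)/√(2σ)) + exp(2x) Erfc((x+σ)/√(2σ)))` for `σ > 0`, `0` else. -/
noncomputable def Hker (σ x : ℝ) : ℝ :=
  if 0 < σ then
    (1 / 2) * (Erfc ((x - σ) / Real.sqrt (2 * σ)) +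
      Real.exp (2 * x) * Erfc ((x + σ) / Real.sqrt (2 * σ)))
  else 0

theorem stieltjes_restrict_eq (S₁ S₂ : StieltjesFunction ℝ) (σ : ℝ)
    (h : ∀ τ ∈ Icc (0:ℝ) σ, S₁ τ = S₂ τ) :
    S₁.measure.restrict (Ioc 0 σ) = S₂.measure.restrict (Ioc 0 σ) := by
  haveI : IsLocallyFiniteMeasure (S₁.measure.restrict (Ioc 0 σ)) :=
    Measure.isLocallyFiniteMeasure_of_le Measure.restrict_le_self
  refine Measure.ext_of_Ioc _ _ (fun a b hab => ?_)
  rw [Measure.restrict_apply measurableSet_Ioc, Measure.restrict_apply measurableSet_Ioc,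
    Ioc_inter_Ioc]
  rcases le_or_gt (b ⊓ σ) (a ⊔ 0) with hle | hlt
  · rw [Ioc_eq_empty (not_lt.mpr hle), measure_empty, measure_empty]
  · rw [StieltjesFunction.measure_Ioc, StieltjesFunction.measure_Ioc,
      h (a ⊔ 0) ⟨le_sup_right, le_trans hlt.le inf_le_right⟩,
      h (b ⊓ σ) ⟨le_trans le_sup_right hlt.le, inf_le_right⟩]

/-- Uniqueness of solutions of the delayed quasi-renewal equation
`G σ = A σ + ∫_{(0,σ]} H(σ-τ, Λ) dμ_G(τ)`, where `μ_G` is the Lebesgue–Stieltjes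
measure of `τ ↦ G (ξfun τ)` with `ξfun σ = σ - ηf σ` for a backward-delay function
`ηf ≥ c > 0` with nondecreasing, right-continuous `ξfun`. -/
theorem quasi_renewal_uniqueness
    (Λ c : ℝ) (hΛ : 0 < Λ) (hc : 0 < c)
    (ηf : ℝ → ℝ) (hηf : ∀ σ : ℝ, 0 ≤ σ → c ≤ ηf σ)
    (ξ₀ : ℝ) (hξ₀ : ξ₀ = -ηf 0)
    (hmono : MonotoneOn (fun σ => σ - ηf σ) (Ici 0))
    (hrc : ∀ σ : ℝ, 0 ≤ σ → ContinuousWithinAt (fun σ => σ - ηf σ) (Ici σ) σ)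
    (A : ℝ → ℝ)
    (G₀ : ℝ → ℝ) (hG₀mono : MonotoneOn G₀ (Icc ξ₀ 0))
    (hG₀cont : ContinuousOn G₀ (Icc ξ₀ 0))
    (G₁ G₂ : ℝ → ℝ)
    (hG₁mono : MonotoneOn G₁ (Ici ξ₀)) (hG₂mono : MonotoneOn G₂ (Ici ξ₀))
    (hG₁cont : ContinuousOn G₁ (Ici ξ₀)) (hG₂cont : ContinuousOn G₂ (Ici ξ₀))
    (hG₁init : ∀ σ ∈ Icc ξ₀ (0 : ℝ), G₁ σ = G₀ σ)
    (hG₂init : ∀ σ ∈ Icc ξ₀ (0 : ℝ), G₂ σ = G₀ σ)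
    (hG₁diff : ContDiffOn ℝ 1 G₁ (Ioi 0)) (hG₂diff : ContDiffOn ℝ 1 G₂ (Ioi 0))
    (S₁ S₂ : StieltjesFunction ℝ)
    (hS₁ : ∀ τ : ℝ, 0 ≤ τ → S₁ τ = G₁ (τ - ηf τ))
    (hS₂ : ∀ τ : ℝ, 0 ≤ τ → S₂ τ = G₂ (τ - ηf τ))
    (heq₁ : ∀ σ : ℝ, 0 ≤ σ →
      G₁ σ = A σ + ∫ τ in Set.Ioc (0 : ℝ) σ, Hker (σ - τ) Λ ∂S₁.measure)
    (heq₂ : ∀ σ : ℝ, 0 ≤ σ →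
      G₂ σ = A σ + ∫ τ in Set.Ioc (0 : ℝ) σ, Hker (σ - τ) Λ ∂S₂.measure) :
    ∀ σ : ℝ, 0 ≤ σ → G₁ σ = G₂ σ :=by
  -- key induction step
  have hstep : ∀ M : ℝ, (∀ t : ℝ, 0 ≤ t → t ≤ M → G₁ t = G₂ t) →
      ∀ σ : ℝ, 0 ≤ σ → σ ≤ M + c → G₁ σ = G₂ σ := by
    intro M hM σ hσ hσM
    have hSS : ∀ τ ∈ Icc (0:ℝ) σ, S₁ τ = S₂ τ := by
      intro τ hτ
      rw [hS₁ τ hτ.1, hS₂ τ hτ.1]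
      have hξle : τ - ηf τ ≤ τ - c := by linarith [hηf τ hτ.1]
      have hξlo : ξ₀ ≤ τ - ηf τ := by
        have := hmono self_mem_Ici hτ.1 hτ.1
        simpa [hξ₀] using this
      rcases le_or_gt (τ - ηf τ) 0 with hle | hgt
      · rw [hG₁init _ ⟨hξlo, hle⟩, hG₂init _ ⟨hξlo, hle⟩]
      · exact hM _ hgt.le (by linarith [hτ.2])
    have hres := stieltjes_restrict_eq S₁ S₂ σ hSS
    rw [heq₁ σ hσ, heq₂ σ hσ, hres]
  have key : ∀ n : ℕ, ∀ σ : ℝ, 0 ≤ σ → σ ≤ n * c → G₁ σ = G₂ σ := by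
    intro n
    induction n with
    | zero => exact fun σ hσ hσn => hstep (-c) (fun t ht ht' => absurd (ht.trans ht')
        (by linarith)) σ hσ (by push_cast at hσn ⊢; linarith)
    | succ n ih => exact fun σ hσ hσn => hstep (n * c) ih σ hσ (by push_cast at hσn ⊢; linarith)
  intro σ hσ
  obtain ⟨n, hn⟩ := exists_nat_ge (σ / c)
  exact key n σ hσ (by rw [div_le_iff₀ hc] at hn; linarith)
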